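/- Duality upper bound on mutual information: Let X and Y be standard Borel measurable spaces, let μ be a probability measure on X, let κ be a Markov kernel from X to Y, and let ν = μ.bind κ be the output (mixture) measure on Y. Then for every probability measure q on Y, ∫ KL(κ(x) ‖ ν) dμ(x) ≤ ∫ KL(κ(x) ‖ q) dμ(x), where both sides are interpreted in the extended nonnegative reals. (The left-hand side is the mutual information of the channel κ with input distribution μ.) -/

import Mathlib

open MeasureTheory ProbabilityTheory
open scoped ENNReal NNReal

section Auxiliary

open Real


lemma phiR_nonneg {t : ℝ} (ht : 0 ≤ t) : 0 ≤ t * Real.log t - t + 1 := by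
  rcases eq_or_lt_of_le ht with h | h
  · simp [← h]
  · have h1 : Real.log t⁻¹ ≤ t⁻¹ - 1 := Real.log_le_sub_one_of_pos (by positivity)
    rw [Real.log_inv] at h1
    have h2 := mul_le_mul_of_nonneg_left h1 h.le
    have h3 : t * t⁻¹ = 1 := mul_inv_cancel₀ h.ne'
    nlinarith

/-- `φe r = ofReal (r log r - r + 1)`, treating `r : ℝ≥0∞` through `toReal`. -/
noncomputable def phiE (r : ℝ≥0∞) : ℝ≥0∞ :=
  ENNReal.ofReal (r.toReal * Real.log r.toReal - r.toReal + 1)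

lemma measurable_phiE : Measurable phiE := by
  unfold phiE
  exact ((measurable_id.ennreal_toReal.mul
    measurable_id.ennreal_toReal.log).sub measurable_id.ennreal_toReal).add_const 1
    |>.ennreal_ofReal

/-- mini-lemma: adding a mean-nonnegative integrable perturbation can only increase
the `ofReal` lintegral. -/
lemma lintegral_ofReal_le_of_add {α : Type*} [MeasurableSpace α] {μ : Measure α}
    {f h c : α → ℝ} (hf : Measurable f) (hf0 : 0 ≤ᵐ[μ] f)
    (hc : Integrable c μ) (hc0 : 0 ≤ ∫ x, c x ∂μ)
    (hfh : ∀ᵐ x ∂μ, h x = f x + c x) (hh0 : 0 ≤ᵐ[μ] h) :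
    ∫⁻ x, ENNReal.ofReal (f x) ∂μ ≤ ∫⁻ x, ENNReal.ofReal (h x) ∂μ := by
  by_cases hfi : Integrable f μ
  · have hhi : Integrable h μ := by
      refine (hfi.add hc).congr ?_
      filter_upwards [hfh] with x hx using hx.symm
    rw [← ofReal_integral_eq_lintegral_ofReal hfi hf0,
      ← ofReal_integral_eq_lintegral_ofReal hhi hh0]
    refine ENNReal.ofReal_le_ofReal ?_
    have : ∫ x, h x ∂μ = ∫ x, f x ∂μ + ∫ x, c x ∂μ := by
      rw [← integral_add hfi hc]
      exact integral_congr_ae hfh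
    linarith
  · -- f not integrable, so LHS = ⊤; show RHS = ⊤ too
    have hftop : ∫⁻ x, ENNReal.ofReal (f x) ∂μ = ⊤ := by
      by_contra hne
      refine hfi ⟨hf.aestronglyMeasurable, ?_⟩
      rw [hasFiniteIntegral_iff_norm]
      have : ∫⁻ x, ENNReal.ofReal ‖f x‖ ∂μ = ∫⁻ x, ENNReal.ofReal (f x) ∂μ := by
        refine lintegral_congr_ae ?_
        filter_upwards [hf0] with x hx
        rw [Real.norm_eq_abs, abs_of_nonneg hx]
      rw [this]
      exact lt_top_iff_ne_top.mpr hne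
    have hkey : ∫⁻ x, ENNReal.ofReal (f x) ∂μ
        ≤ ∫⁻ x, ENNReal.ofReal (h x) ∂μ + ∫⁻ x, ENNReal.ofReal (- c x) ∂μ := by
      have hcm : AEMeasurable (fun x => ENNReal.ofReal (- c x)) μ :=
        (hc.aemeasurable.neg).ennreal_ofReal
      calc ∫⁻ x, ENNReal.ofReal (f x) ∂μ
          ≤ ∫⁻ x, (ENNReal.ofReal (h x) + ENNReal.ofReal (- c x)) ∂μ := by
            refine lintegral_mono_ae ?_
            filter_upwards [hfh] with x hx
            have : f x = h x + (- c x) := by rw [hx]; ring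
            rw [this]
            exact ENNReal.ofReal_add_le
        _ = ∫⁻ x, ENNReal.ofReal (h x) ∂μ + ∫⁻ x, ENNReal.ofReal (- c x) ∂μ :=
            lintegral_add_right' _ hcm
    have hcfin : ∫⁻ x, ENNReal.ofReal (- c x) ∂μ < ⊤ := by
      have hcb : ∀ x, ENNReal.ofReal (- c x) ≤ ENNReal.ofReal ‖c x‖ := fun x =>
        ENNReal.ofReal_le_ofReal (by rw [Real.norm_eq_abs]; exact neg_le_abs _)
      calc ∫⁻ x, ENNReal.ofReal (- c x) ∂μ ≤ ∫⁻ x, ENNReal.ofReal ‖c x‖ ∂μ :=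
            lintegral_mono hcb
        _ < ⊤ := by
            have := hc.hasFiniteIntegral
            rwa [hasFiniteIntegral_iff_norm] at this
    rw [hftop] at hkey
    have : ∫⁻ x, ENNReal.ofReal (h x) ∂μ = ⊤ := by
      by_contra hne
      exact absurd (top_le_iff.mp hkey) (by
        exact ne_of_lt (ENNReal.add_lt_top.mpr ⟨lt_top_iff_ne_top.mpr hne, hcfin⟩))
    simp [this]


end Auxiliary

open Classical in
/-- Kullback–Leibler divergence between two measures, valued in `[0, ∞]`:
`∫ log (dP/dQ) dP` when `P ≪ Q` and this log-likelihood ratio is integrable,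
and `∞` otherwise. -/
noncomputable def klDiv {α : Type*} [MeasurableSpace α] (P Q : Measure α) : ℝ≥0∞ :=
  if P ≪ Q ∧ Integrable (llr P Q) P then ENNReal.ofReal (∫ x, llr P Q x ∂P) else ⊤

section Auxiliary2

open Real

/-- negative part of llr has lintegral bounded by `Q univ`. -/
lemma lintegral_ofReal_neg_llr_le {Y : Type*} [MeasurableSpace Y] (P Q : Measure Y)
    [IsFiniteMeasure P] [IsFiniteMeasure Q] (hPQ : P ≪ Q) :
    ∫⁻ y, ENNReal.ofReal (max (- llr P Q y) 0) ∂P ≤ Q Set.univ := by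
  have hm : Measurable fun y => ENNReal.ofReal (max (- llr P Q y) 0) :=
    (((measurable_llr P Q).neg).max measurable_const).ennreal_ofReal
  rw [← lintegral_rnDeriv_mul hPQ hm.aemeasurable]
  calc ∫⁻ y, P.rnDeriv Q y * ENNReal.ofReal (max (- llr P Q y) 0) ∂Q
      ≤ ∫⁻ _, 1 ∂Q := by
        refine lintegral_mono_ae ?_
        filter_upwards [Measure.rnDeriv_lt_top P Q] with y hy
        set rr := (P.rnDeriv Q y).toReal with hrr
        have h0 : 0 ≤ rr := ENNReal.toReal_nonneg
        have hb : rr * max (- Real.log rr) 0 ≤ 1 := by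
          rcases eq_or_lt_of_le h0 with h | h
          · simp [← h]
          · rcases max_cases (- Real.log rr) 0 with ⟨he, _⟩ | ⟨he, _⟩
            · have h1 : Real.log rr⁻¹ ≤ rr⁻¹ - 1 := Real.log_le_sub_one_of_pos (by positivity)
              rw [Real.log_inv] at h1
              have h3 : rr * rr⁻¹ = 1 := mul_inv_cancel₀ h.ne'
              rw [he]
              nlinarith [mul_le_mul_of_nonneg_left h1 h.le]
            · rw [he]; simp
        have h' : P.rnDeriv Q y = ENNReal.ofReal rr := (ENNReal.ofReal_toReal hy.ne).symm
        calc P.rnDeriv Q y * ENNReal.ofReal (max (- llr P Q y) 0)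
            = ENNReal.ofReal rr * ENNReal.ofReal (max (- Real.log rr) 0) := by
              rw [h']; rfl
          _ = ENNReal.ofReal (rr * max (- Real.log rr) 0) := (ENNReal.ofReal_mul h0).symm
          _ ≤ ENNReal.ofReal 1 := ENNReal.ofReal_le_ofReal hb
          _ = 1 := ENNReal.ofReal_one
    _ = Q Set.univ := by simp

lemma klDiv_eq_lintegral_phiE {Y : Type*} [MeasurableSpace Y] (P Q : Measure Y)
    [IsProbabilityMeasure P] [IsProbabilityMeasure Q] (hPQ : P ≪ Q) :
    klDiv P Q = ∫⁻ y, phiE (P.rnDeriv Q y) ∂Q := by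
  classical
  have hrm : Measurable fun y => (P.rnDeriv Q y).toReal :=
    (Measure.measurable_rnDeriv P Q).ennreal_toReal
  by_cases hint : Integrable (llr P Q) P
  · rw [klDiv, if_pos ⟨hPQ, hint⟩]
    have i1 : Integrable (fun y => (P.rnDeriv Q y).toReal) Q :=
      Measure.integrable_toReal_rnDeriv
    have i2 : Integrable (fun y => (P.rnDeriv Q y).toReal * Real.log (P.rnDeriv Q y).toReal) Q := by
      have := (integrable_rnDeriv_smul_iff hPQ).mpr hint
      simpa [llr, smul_eq_mul] using this
    have i3 : Integrable (fun y => (P.rnDeriv Q y).toReal * Real.log (P.rnDeriv Q y).toReal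
        - (P.rnDeriv Q y).toReal) Q := i2.sub i1
    have iφ : Integrable
        (fun y => (P.rnDeriv Q y).toReal * Real.log (P.rnDeriv Q y).toReal
          - (P.rnDeriv Q y).toReal + 1) Q := i3.add (integrable_const 1)
    rw [show (fun y => phiE (P.rnDeriv Q y)) = fun y =>
        ENNReal.ofReal ((P.rnDeriv Q y).toReal * Real.log (P.rnDeriv Q y).toReal
          - (P.rnDeriv Q y).toReal + 1) from rfl,
      ← ofReal_integral_eq_lintegral_ofReal iφ
        (Filter.Eventually.of_forall fun y => phiR_nonneg ENNReal.toReal_nonneg)]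
    congr 1
    have hsmul : ∫ y, (P.rnDeriv Q y).toReal * Real.log (P.rnDeriv Q y).toReal ∂Q
        = ∫ y, llr P Q y ∂P := by
      have := integral_rnDeriv_smul (f := llr P Q) hPQ
      simpa [llr, smul_eq_mul] using this
    rw [integral_add i3 (integrable_const 1), integral_sub i2 i1,
      Measure.integral_toReal_rnDeriv hPQ, hsmul]
    simp [measure_univ]
  · rw [klDiv, if_neg (by tauto)]
    symm
    -- show the phi-lintegral is ⊤
    have hnotHFI : ¬ HasFiniteIntegral (llr P Q) P := fun h =>
      hint ⟨(measurable_llr P Q).aestronglyMeasurable, h⟩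
    have habs : ∫⁻ y, ENNReal.ofReal ‖llr P Q y‖ ∂P = ⊤ := by
      by_contra hne
      exact hnotHFI (by rwa [hasFiniteIntegral_iff_norm, lt_top_iff_ne_top])
    have hneg := lintegral_ofReal_neg_llr_le P Q hPQ
    have hpos : ∫⁻ y, ENNReal.ofReal (max (llr P Q y) 0) ∂P = ⊤ := by
      by_contra hne
      have hsplit : ∫⁻ y, ENNReal.ofReal ‖llr P Q y‖ ∂P
          ≤ ∫⁻ y, ENNReal.ofReal (max (llr P Q y) 0) ∂P
            + ∫⁻ y, ENNReal.ofReal (max (- llr P Q y) 0) ∂P := by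
        have hmneg : AEMeasurable (fun y => ENNReal.ofReal (max (- llr P Q y) 0)) P :=
          ((((measurable_llr P Q).neg).max measurable_const).ennreal_ofReal).aemeasurable
        calc ∫⁻ y, ENNReal.ofReal ‖llr P Q y‖ ∂P
            ≤ ∫⁻ y, (ENNReal.ofReal (max (llr P Q y) 0)
                + ENNReal.ofReal (max (- llr P Q y) 0)) ∂P := by
              refine lintegral_mono fun y => ?_
              have h1 : ‖llr P Q y‖ = max (llr P Q y) 0 + max (- llr P Q y) 0 := by
                rcases le_total (llr P Q y) 0 with h | h
                · rw [Real.norm_eq_abs, abs_of_nonpos h, max_eq_right h,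
                    max_eq_left (by linarith)]; ring
                · rw [Real.norm_eq_abs, abs_of_nonneg h, max_eq_left h,
                    max_eq_right (by linarith)]; ring
              rw [h1]
              exact ENNReal.ofReal_add_le
          _ = _ := lintegral_add_right' _ hmneg
      rw [habs] at hsplit
      have : (⊤ : ℝ≥0∞) < ⊤ := lt_of_le_of_lt hsplit
        (ENNReal.add_lt_top.mpr ⟨lt_top_iff_ne_top.mpr hne, lt_of_le_of_lt hneg (measure_lt_top Q _)⟩)
      exact absurd this (lt_irrefl _)
    -- transfer the positive part to Q
    have hmpos : Measurable fun y => ENNReal.ofReal (max (llr P Q y) 0) :=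
      ((measurable_llr P Q).max measurable_const).ennreal_ofReal
    have htrans : ∫⁻ y, ENNReal.ofReal (max (llr P Q y) 0) ∂P
        = ∫⁻ y, P.rnDeriv Q y * ENNReal.ofReal (max (llr P Q y) 0) ∂Q :=
      (lintegral_rnDeriv_mul hPQ hmpos.aemeasurable).symm
    have hbound : ∫⁻ y, P.rnDeriv Q y * ENNReal.ofReal (max (llr P Q y) 0) ∂Q
        ≤ ∫⁻ y, (phiE (P.rnDeriv Q y) + P.rnDeriv Q y) ∂Q := by
      refine lintegral_mono_ae ?_
      filter_upwards [Measure.rnDeriv_lt_top P Q] with y hy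
      set rr := (P.rnDeriv Q y).toReal with hrr
      have h0 : 0 ≤ rr := ENNReal.toReal_nonneg
      have hb : rr * max (Real.log rr) 0 ≤ (rr * Real.log rr - rr + 1) + rr := by
        rcases max_cases (Real.log rr) 0 with ⟨he, _⟩ | ⟨he, _⟩
        · rw [he]; linarith
        · rw [he]; nlinarith [phiR_nonneg h0]
      have h' : P.rnDeriv Q y = ENNReal.ofReal rr := (ENNReal.ofReal_toReal hy.ne).symm
      calc P.rnDeriv Q y * ENNReal.ofReal (max (llr P Q y) 0)
          = ENNReal.ofReal (rr * max (Real.log rr) 0) := by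
            rw [h', ← ENNReal.ofReal_mul h0]; rfl
        _ ≤ ENNReal.ofReal ((rr * Real.log rr - rr + 1) + rr) := ENNReal.ofReal_le_ofReal hb
        _ ≤ ENNReal.ofReal (rr * Real.log rr - rr + 1) + ENNReal.ofReal rr :=
            ENNReal.ofReal_add_le
        _ = phiE (P.rnDeriv Q y) + P.rnDeriv Q y := by
            rw [phiE, ENNReal.ofReal_toReal hy.ne]
    have hadd : ∫⁻ y, (phiE (P.rnDeriv Q y) + P.rnDeriv Q y) ∂Q
        = ∫⁻ y, phiE (P.rnDeriv Q y) ∂Q + ∫⁻ y, P.rnDeriv Q y ∂Q := by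
      refine lintegral_add_right' _ (Measure.measurable_rnDeriv P Q).aemeasurable
    have hfin : ∫⁻ y, P.rnDeriv Q y ∂Q = 1 := by
      rw [Measure.lintegral_rnDeriv hPQ]; simp
    have hle : (⊤ : ℝ≥0∞) ≤ ∫⁻ y, phiE (P.rnDeriv Q y) ∂Q + 1 := by
      rw [← hfin, ← hadd]
      calc (⊤ : ℝ≥0∞) = ∫⁻ y, ENNReal.ofReal (max (llr P Q y) 0) ∂P := hpos.symm
        _ = ∫⁻ y, P.rnDeriv Q y * ENNReal.ofReal (max (llr P Q y) 0) ∂Q := htrans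
        _ ≤ _ := hbound
    by_contra hne
    have h1 : ∫⁻ y, phiE (P.rnDeriv Q y) ∂Q + 1 < ⊤ :=
      ENNReal.add_lt_top.mpr ⟨lt_top_iff_ne_top.mpr hne, ENNReal.one_lt_top⟩
    exact absurd (lt_of_le_of_lt hle h1) (lt_irrefl _)

lemma slice_lemma {X : Type*} [MeasurableSpace X] (μ : Measure X) [IsProbabilityMeasure μ]
    (A : X → ℝ≥0∞) (hA : Measurable A) (hA1 : ∫⁻ x, A x ∂μ = 1)
    (t : ℝ≥0∞) (ht : t ≠ ⊤) :
    t * ∫⁻ x, phiE (A x) ∂μ ≤ ∫⁻ x, phiE (A x * t) ∂μ := by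
  rcases eq_or_ne t 0 with rfl | ht0
  · simp
  set s : ℝ := t.toReal with hs
  have hs0 : 0 < s := ENNReal.toReal_pos ht0 ht
  have hAfin : ∀ᵐ x ∂μ, A x < ⊤ := ae_lt_top hA (by rw [hA1]; exact ENNReal.one_ne_top)
  have hAint : Integrable (fun x => (A x).toReal) μ :=
    integrable_toReal_of_lintegral_ne_top hA.aemeasurable (by rw [hA1]; exact ENNReal.one_ne_top)
  have hAmean : ∫ x, (A x).toReal ∂μ = 1 := by
    rw [integral_toReal hA.aemeasurable hAfin, hA1]; rfl
  set c : X → ℝ := fun x => (A x).toReal * (s * Real.log s) + (1 - s) with hc_def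
  have hcint : Integrable c μ := (hAint.mul_const _).add (integrable_const _)
  have hcmean : 0 ≤ ∫ x, c x ∂μ := by
    rw [hc_def]
    rw [integral_add (hAint.mul_const _) (integrable_const _), integral_mul_const,
      hAmean, integral_const]
    simp only [measure_univ, probReal_univ, ENNReal.toReal_one, one_smul, one_mul]
    have := phiR_nonneg hs0.le
    linarith
  set f : X → ℝ := fun x => s * ((A x).toReal * Real.log (A x).toReal - (A x).toReal + 1)
    with hf_def
  have hfm : Measurable f :=
    (((hA.ennreal_toReal.mul hA.ennreal_toReal.log).sub hA.ennreal_toReal).add_const 1).const_mul s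
  have hf0 : 0 ≤ᵐ[μ] f := Filter.Eventually.of_forall fun x =>
    mul_nonneg hs0.le (phiR_nonneg ENNReal.toReal_nonneg)
  set h : X → ℝ := fun x =>
    (A x * t).toReal * Real.log (A x * t).toReal - (A x * t).toReal + 1 with hh_def
  have hh0 : 0 ≤ᵐ[μ] h := Filter.Eventually.of_forall fun x =>
    phiR_nonneg ENNReal.toReal_nonneg
  have hfh : ∀ᵐ x ∂μ, h x = f x + c x := by
    filter_upwards [hAfin] with x hx
    have htr : (A x * t).toReal = (A x).toReal * s := by
      rw [ENNReal.toReal_mul]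
    rw [hh_def, hf_def, hc_def]
    simp only
    rw [htr]
    set a : ℝ := (A x).toReal with ha
    have ha0 : 0 ≤ a := ENNReal.toReal_nonneg
    rcases eq_or_lt_of_le ha0 with h0 | h0
    · rw [← h0]
      simp [Real.log_zero]
    · rw [Real.log_mul h0.ne' hs0.ne']
      ring
  have hmain := lintegral_ofReal_le_of_add hfm hf0 hcint hcmean hfh hh0
  have hleft : ∫⁻ x, ENNReal.ofReal (f x) ∂μ = t * ∫⁻ x, phiE (A x) ∂μ := by
    have : ∀ x, ENNReal.ofReal (f x) = ENNReal.ofReal s * phiE (A x) := fun x => by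
      rw [hf_def]
      simp only
      rw [ENNReal.ofReal_mul hs0.le]
      rfl
    simp_rw [this]
    rw [lintegral_const_mul _ (by
      -- measurability of phiE ∘ A
      exact (((hA.ennreal_toReal.mul hA.ennreal_toReal.log).sub
        hA.ennreal_toReal).add_const 1).ennreal_ofReal)]
    rw [ENNReal.ofReal_toReal ht]
  have hright : ∫⁻ x, ENNReal.ofReal (h x) ∂μ = ∫⁻ x, phiE (A x * t) ∂μ := rfl
  rw [← hleft, ← hright]
  exact hmain

end Auxiliary2

open Real in
/-- Duality upper bound on mutual information: for any probability measure `q` on the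
output space, `∫ KL(κ(x) ‖ ν) dμ(x) ≤ ∫ KL(κ(x) ‖ q) dμ(x)` where `ν = μ.bind κ` is the
output measure; the left-hand side is the mutual information of the channel `κ` with
input distribution `μ`. -/
theorem mutualInfo_le_integral_klDiv {X Y : Type*} [MeasurableSpace X] [StandardBorelSpace X]
    [MeasurableSpace Y] [StandardBorelSpace Y]
    (μ : Measure X) [IsProbabilityMeasure μ]
    (κ : Kernel X Y) [IsMarkovKernel κ]
    (ν : Measure Y) (hν : ν = μ.bind (fun x => κ x))
    (q : Measure Y) [IsProbabilityMeasure q] :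
    ∫⁻ x, klDiv (κ x) ν ∂μ ≤ ∫⁻ x, klDiv (κ x) q ∂μ := by
  classical
  have hνP : IsProbabilityMeasure ν := by
    constructor
    rw [hν, Measure.bind_apply MeasurableSet.univ κ.measurable.aemeasurable]
    simp
  have hSm : MeasurableSet {x | κ x ≪ q} := by
    have h := Kernel.measurableSet_absolutelyContinuous κ (Kernel.const X q)
    simpa [Kernel.const_apply] using h
  by_cases hSq : μ {x | κ x ≪ q}ᶜ = 0
  case neg =>
    have htop : ∫⁻ x, klDiv (κ x) q ∂μ = ⊤ := by
      refine eq_top_iff.mpr ?_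
      calc (⊤ : ℝ≥0∞) = ⊤ * μ {x | κ x ≪ q}ᶜ := (ENNReal.top_mul hSq).symm
        _ = ∫⁻ x, ({x | κ x ≪ q}ᶜ).indicator (fun _ => (⊤ : ℝ≥0∞)) x ∂μ := by
            rw [lintegral_indicator hSm.compl]
            simp [mul_comm]
        _ ≤ ∫⁻ x, klDiv (κ x) q ∂μ := by
            refine lintegral_mono fun x => ?_
            by_cases hx : x ∈ {x | κ x ≪ q}ᶜ
            · rw [Set.indicator_of_mem hx, klDiv, if_neg (fun hcon => hx hcon.1)]
            · rw [Set.indicator_of_notMem hx]; exact zero_le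
    rw [htop]; exact le_top
  case pos =>
  have hacq : ∀ᵐ x ∂μ, κ x ≪ q := by
    rw [ae_iff]; exact hSq
  have hνq : ν ≪ q := by
    refine Measure.AbsolutelyContinuous.mk fun A hA hqA => ?_
    rw [hν, Measure.bind_apply hA κ.measurable.aemeasurable]
    have h0 : (fun x => κ x A) =ᵐ[μ] 0 := by
      filter_upwards [hacq] with x hx using hx hqA
    rw [lintegral_congr_ae h0]
    simp
  set g : Y → ℝ≥0∞ := ν.rnDeriv q with hgdef
  have hgm : Measurable g := Measure.measurable_rnDeriv ν q
  set Z : Set Y := {y | g y = 0} with hZdef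
  have hZm : MeasurableSet Z := hgm (measurableSet_singleton 0)
  -- a ν-null measurable set meets {g ≠ 0} in a q-null set
  have hq0 : ∀ B : Set Y, MeasurableSet B → ν B = 0 → q (B ∩ {y | g y ≠ 0}) = 0 := by
    intro B hBm hB0
    have hres : ∀ᵐ y ∂(q.restrict B), g y = 0 := by
      have h : ∫⁻ y in B, g y ∂q = 0 := by
        rw [Measure.setLIntegral_rnDeriv hνq]; exact hB0
      exact (lintegral_eq_zero_iff hgm).mp h
    have h2 := (ae_restrict_iff' hBm).mp hres
    rw [ae_iff] at h2
    have hseteq : {y | ¬(y ∈ B → g y = 0)} = B ∩ {y | g y ≠ 0} := by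
      ext y; simp [Classical.not_imp]
    rwa [hseteq] at h2
  have hνZ : ν Z = 0 := by
    rw [← Measure.setLIntegral_rnDeriv hνq Z]
    have h : ∫⁻ y in Z, g y ∂q = ∫⁻ y in Z, 0 ∂q :=
      setLIntegral_congr_fun hZm (fun y hy => hy)
    rw [h, lintegral_zero]
  have hZ0 : ∀ᵐ x ∂μ, κ x Z = 0 := by
    have hint0 : ∫⁻ x, κ x Z ∂μ = 0 := by
      rw [← Measure.bind_apply hZm κ.measurable.aemeasurable, ← hν]
      exact hνZ
    exact (lintegral_eq_zero_iff (κ.measurable_coe hZm)).mp hint0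
  have hacν : ∀ᵐ x ∂μ, κ x ≪ ν := by
    filter_upwards [hacq, hZ0] with x hxq hxZ
    refine Measure.AbsolutelyContinuous.mk fun A hA hνA => ?_
    have hgA : q (A ∩ {y | g y ≠ 0}) = 0 := hq0 A hA hνA
    refine le_antisymm ?_ zero_le
    calc κ x A ≤ κ x ((A ∩ {y | g y ≠ 0}) ∪ Z) := by
          refine measure_mono fun y hy => ?_
          by_cases hgy : g y = 0
          · exact Or.inr hgy
          · exact Or.inl ⟨hy, hgy⟩
      _ ≤ κ x (A ∩ {y | g y ≠ 0}) + κ x Z := measure_union_le _ _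
      _ ≤ 0 := by rw [hxq hgA, hxZ, add_zero]
  -- jointly measurable version of the density of κ x wrt ν
  set ρ : X → Y → ℝ≥0∞ := Kernel.rnDeriv κ (Kernel.const X ν) with hρdef
  have hρm : Measurable fun p : X × Y => ρ p.1 p.2 :=
    Kernel.measurable_rnDeriv κ (Kernel.const X ν)
  have hρx : ∀ x, ρ x =ᵐ[ν] (κ x).rnDeriv ν := by
    intro x
    have h := Kernel.rnDeriv_eq_rnDeriv_measure (κ := κ) (η := Kernel.const X ν) (a := x)
    simpa [Kernel.const_apply] using h
  have key : ∫⁻ x, (∫⁻ y, phiE ((κ x).rnDeriv ν y) ∂ν) ∂μ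
      ≤ ∫⁻ x, (∫⁻ y, phiE ((κ x).rnDeriv q y) ∂q) ∂μ := by
    have hL : ∀ x, ∫⁻ y, phiE ((κ x).rnDeriv ν y) ∂ν = ∫⁻ y, g y * phiE (ρ x y) ∂q := by
      intro x
      have hsec : Measurable fun y => ρ x y := Kernel.measurable_rnDeriv_right κ _ x
      calc ∫⁻ y, phiE ((κ x).rnDeriv ν y) ∂ν
          = ∫⁻ y, phiE (ρ x y) ∂ν :=
            lintegral_congr_ae ((hρx x).mono fun y hy => (congrArg phiE hy).symm)
        _ = ∫⁻ y, g y * phiE (ρ x y) ∂q :=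
            (lintegral_rnDeriv_mul hνq (measurable_phiE.comp hsec).aemeasurable).symm
    have hR : ∀ᵐ x ∂μ, ∫⁻ y, phiE ((κ x).rnDeriv q y) ∂q = ∫⁻ y, phiE (ρ x y * g y) ∂q := by
      filter_upwards [hacq, hacν, hZ0] with x hxq hxν hxZ
      refine lintegral_congr_ae ?_
      have h1 : (κ x).rnDeriv ν * ν.rnDeriv q =ᵐ[q] (κ x).rnDeriv q :=
        Measure.rnDeriv_mul_rnDeriv hxν
      have h2 : ν {y | ¬ ρ x y = (κ x).rnDeriv ν y} = 0 := ae_iff.mp (hρx x)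
      set B : Set Y := toMeasurable ν {y | ¬ ρ x y = (κ x).rnDeriv ν y} with hBdef
      have hBsub : {y | ¬ ρ x y = (κ x).rnDeriv ν y} ⊆ B := subset_toMeasurable _ _
      have hBm : MeasurableSet B := measurableSet_toMeasurable _ _
      have hB0 : ν B = 0 := by rw [hBdef, measure_toMeasurable]; exact h2
      have hqB : q (B ∩ {y | g y ≠ 0}) = 0 := hq0 B hBm hB0
      have hZrn : ∀ᵐ y ∂q, y ∈ Z → (κ x).rnDeriv q y = 0 := by
        refine (ae_restrict_iff' hZm).mp ?_
        have h : ∫⁻ y in Z, (κ x).rnDeriv q y ∂q = 0 := by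
          rw [Measure.setLIntegral_rnDeriv hxq]; exact hxZ
        exact (lintegral_eq_zero_iff (Measure.measurable_rnDeriv _ _)).mp h
      have hBq : ∀ᵐ y ∂q, ¬ y ∈ B ∩ {y | g y ≠ 0} := by
        rw [ae_iff]; simp only [not_not]; exact hqB
      have hcomb : ∀ᵐ y ∂q, ρ x y * g y = (κ x).rnDeriv q y := by
        filter_upwards [h1, hZrn, hBq] with y h1y hZy hBy
        by_cases hgy : g y = 0
        · rw [hgy, mul_zero, hZy hgy]
        · have hyB : y ∉ B := fun hyB => hBy ⟨hyB, hgy⟩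
          have hyeq : ρ x y = (κ x).rnDeriv ν y := by
            by_contra hne
            exact hyB (hBsub hne)
          rw [hyeq]
          exact h1y
      exact hcomb.mono fun y hy => (congrArg phiE hy).symm
    rw [lintegral_congr hL, lintegral_congr_ae hR]
    have ham1 : AEMeasurable (Function.uncurry fun x y => g y * phiE (ρ x y)) (μ.prod q) := by
      exact ((hgm.comp measurable_snd).mul (measurable_phiE.comp hρm)).aemeasurable
    have ham2 : AEMeasurable (Function.uncurry fun x y => phiE (ρ x y * g y)) (μ.prod q) := by
      exact (measurable_phiE.comp (hρm.mul (hgm.comp measurable_snd))).aemeasurable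
    rw [lintegral_lintegral_swap ham1, lintegral_lintegral_swap ham2]
    -- H y = ∫⁻ x, ρ x y ∂μ and H = 1 a.e. where g ≠ 0
    set H : Y → ℝ≥0∞ := fun y => ∫⁻ x, ρ x y ∂μ with hHdef
    have hHm : Measurable H := Measurable.lintegral_prod_left hρm
    have hHg : (fun y => H y * g y) =ᵐ[q] g := by
      refine ae_eq_of_forall_setLIntegral_eq_of_sigmaFinite (hHm.mul hgm) hgm fun s hs _ => ?_
      have hswap : ∫⁻ x, ∫⁻ y in s, ρ x y ∂ν ∂μ = ∫⁻ y in s, H y ∂ν := by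
        exact lintegral_lintegral_swap hρm.aemeasurable
      calc ∫⁻ y in s, H y * g y ∂q
          = ∫⁻ y in s, g y * H y ∂q := by simp_rw [mul_comm]
        _ = ∫⁻ y in s, H y ∂ν := setLIntegral_rnDeriv_mul hνq hHm.aemeasurable hs
        _ = ∫⁻ x, ∫⁻ y in s, ρ x y ∂ν ∂μ := hswap.symm
        _ = ∫⁻ x, κ x s ∂μ := by
            refine lintegral_congr_ae ?_
            filter_upwards [hacν] with x hx
            have : ∫⁻ y in s, ρ x y ∂ν = ∫⁻ y in s, (κ x).rnDeriv ν y ∂ν :=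
              lintegral_congr_ae (ae_restrict_of_ae ((hρx x).mono fun y hy => hy))
            rw [this, Measure.setLIntegral_rnDeriv hx]
        _ = ν s := by rw [← Measure.bind_apply hs κ.measurable.aemeasurable, ← hν]
        _ = ∫⁻ y in s, g y ∂q := (Measure.setLIntegral_rnDeriv hνq s).symm
    refine lintegral_mono_ae ?_
    filter_upwards [hHg, Measure.rnDeriv_lt_top ν q] with y hy hyt
    by_cases hgy : g y = 0
    · simp [hgy]
    · have hH1 : H y = 1 := by
        have h := congrArg (· * (g y)⁻¹) hy
        simpa [mul_assoc, ENNReal.mul_inv_cancel hgy hyt.ne] using h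
      have hsec : Measurable fun x => ρ x y := hρm.comp (measurable_prodMk_right)
      have hsec2 : Measurable fun x => phiE (ρ x y) := measurable_phiE.comp hsec
      rw [lintegral_const_mul _ hsec2]
      exact slice_lemma μ _ hsec hH1 (g y) hyt.ne
  calc ∫⁻ x, klDiv (κ x) ν ∂μ
      = ∫⁻ x, (∫⁻ y, phiE ((κ x).rnDeriv ν y) ∂ν) ∂μ :=
        lintegral_congr_ae (by
          filter_upwards [hacν] with x hx using klDiv_eq_lintegral_phiE _ _ hx)
    _ ≤ ∫⁻ x, (∫⁻ y, phiE ((κ x).rnDeriv q y) ∂q) ∂μ := key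
    _ = ∫⁻ x, klDiv (κ x) q ∂μ :=
        (lintegral_congr_ae (by
          filter_upwards [hacq] with x hx using klDiv_eq_lintegral_phiE _ _ hx)).symm
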